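/- The ratio b_{n+1}^{1/(n+1)} / b_n^{1/n} converges to 1 as n → ∞. -/

import Mathlib

open Finset

def w (k : ℕ) : ℕ := 3*k^2+3*k+1
def t (n k : ℕ) : ℕ := w k * ((n-1).choose k)^2 * ((n+k).choose k)^2
def S (n : ℕ) : ℕ := ∑ k ∈ Finset.range n, t n k

-- small choose lemmas
lemma ch1 {n k : ℕ} (h : 2*k ≤ n) : n.choose k ≤ 2 * (n-1).choose k := by
  rcases Nat.eq_zero_or_pos k with rfl | hk
  · simp
  · obtain ⟨j, rfl⟩ : ∃ j, k = j + 1 := ⟨k-1, by omega⟩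
    obtain ⟨m, rfl⟩ : ∃ m, n = m + 1 := ⟨n - 1, by omega⟩
    simp only [Nat.add_sub_cancel]
    rw [Nat.choose_succ_succ' m j]
    have key : m.choose j ≤ m.choose (j+1) := by
      have := Nat.choose_succ_right_eq m j
      -- m.choose (j+1) * (j+1) = m.choose j * (m - j)
      have hj : j + 1 ≤ m - j := by omega
      have : m.choose j * (j+1) ≤ m.choose (j+1) * (j+1) := by
        calc m.choose j * (j+1) ≤ m.choose j * (m - j) := by
              exact Nat.mul_le_mul_left _ hj
          _ = m.choose (j+1) * (j+1) := this.symm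
      exact Nat.le_of_mul_le_mul_right this (by omega)
    omega

lemma ch2 {n k : ℕ} (h : k ≤ n) : (n+k+1).choose k ≤ 2 * (n+k).choose k := by
  rcases Nat.eq_zero_or_pos k with rfl | hk
  · simp
  · obtain ⟨j, rfl⟩ : ∃ j, k = j + 1 := ⟨k-1, by omega⟩
    rw [show n+(j+1)+1 = (n+(j+1))+1 by omega, Nat.choose_succ_succ' (n+(j+1)) j]
    have key : (n+(j+1)).choose j ≤ (n+(j+1)).choose (j+1) := by
      have h2 := Nat.choose_succ_right_eq (n+(j+1)) j
      have : (n+(j+1)).choose j * (j+1) ≤ (n+(j+1)).choose (j+1) * (j+1) := by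
        calc (n+(j+1)).choose j * (j+1) ≤ (n+(j+1)).choose j * (n+(j+1)-j) := by
              exact Nat.mul_le_mul_left _ (by omega)
          _ = (n+(j+1)).choose (j+1) * (j+1) := h2.symm
      exact Nat.le_of_mul_le_mul_right this (by omega)
    omega

lemma ch4 {n k : ℕ} (h : n < 2*k) (h2 : k ≤ n) : n.choose k ≤ 2 * (n-1).choose (k-1) := by
  obtain ⟨j, rfl⟩ : ∃ j, k = j + 1 := ⟨k-1, by omega⟩
  obtain ⟨m, rfl⟩ : ∃ m, n = m + 1 := ⟨n-1, by omega⟩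
  simp only [Nat.add_sub_cancel]
  have hs := Nat.add_one_mul_choose_eq m j
  -- (m+1) * m.choose j = (m+1).choose (j+1) * (j+1)
  have : (m+1).choose (j+1) * (j+1) ≤ (2 * m.choose j) * (j+1) := by
    calc (m+1).choose (j+1) * (j+1) = (m+1) * m.choose j := hs.symm
      _ ≤ (2*(j+1)) * m.choose j := Nat.mul_le_mul_right _ (by omega)
      _ = (2 * m.choose j) * (j+1) := by ring
  exact Nat.le_of_mul_le_mul_right this (by omega)

lemma ch5a {n k : ℕ} (h : n < 2*k) (h2 : k ≤ n) :
    (n+k).choose k ≤ 3 * (n+k-1).choose (k-1) := by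
  obtain ⟨j, rfl⟩ : ∃ j, k = j + 1 := ⟨k-1, by omega⟩
  have e : n + (j+1) - 1 = n + j := by omega
  rw [e, show n+(j+1) = (n+j)+1 by omega]
  simp only [Nat.add_sub_cancel]
  have hs := Nat.add_one_mul_choose_eq (n+j) j
  have : ((n+j)+1).choose (j+1) * (j+1) ≤ (3 * (n+j).choose j) * (j+1) := by
    calc ((n+j)+1).choose (j+1) * (j+1) = ((n+j)+1) * (n+j).choose j := hs.symm
      _ ≤ (3*(j+1)) * (n+j).choose j := Nat.mul_le_mul_right _ (by omega)
      _ = (3 * (n+j).choose j) * (j+1) := by ring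
  exact Nat.le_of_mul_le_mul_right this (by omega)

lemma ch5b {n k : ℕ} (hk : 1 ≤ k) (h2 : k ≤ n + 1) :
    (n+k).choose (k-1) ≤ 2 * (n+k-1).choose (k-1) := by
  obtain ⟨j, rfl⟩ : ∃ j, k = j + 1 := ⟨k-1, by omega⟩
  simp only [Nat.add_sub_cancel]
  have e : n + (j+1) - 1 = n + j := by omega
  rw [e]
  rcases Nat.eq_zero_or_pos j with rfl | hj
  · simp
  obtain ⟨i, rfl⟩ : ∃ i, j = i + 1 := ⟨j-1, by omega⟩
  rw [show n+(i+1+1) = (n+(i+1))+1 by omega, Nat.choose_succ_succ' (n+(i+1)) i]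
  have key : (n+(i+1)).choose i ≤ (n+(i+1)).choose (i+1) := by
    have h3 := Nat.choose_succ_right_eq (n+(i+1)) i
    have : (n+(i+1)).choose i * (i+1) ≤ (n+(i+1)).choose (i+1) * (i+1) := by
      calc (n+(i+1)).choose i * (i+1) ≤ (n+(i+1)).choose i * (n+(i+1)-i) := by
            exact Nat.mul_le_mul_left _ (by omega)
        _ = (n+(i+1)).choose (i+1) * (i+1) := h3.symm
    exact Nat.le_of_mul_le_mul_right this (by omega)
  omega

lemma ch5 {n k : ℕ} (h : n < 2*k) (h2 : k ≤ n) :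
    (n+k+1).choose k ≤ 5 * (n+k-1).choose (k-1) := by
  obtain ⟨j, rfl⟩ : ∃ j, k = j + 1 := ⟨k-1, by omega⟩
  rw [show n+(j+1)+1 = (n+(j+1))+1 by omega, Nat.choose_succ_succ' (n+(j+1)) j]
  have h5a := ch5a h h2
  have h5b := ch5b (by omega) (by omega : j+1 ≤ n+1)
  simp only [Nat.add_sub_cancel] at h5a h5b ⊢
  omega

lemma w_succ_le (k : ℕ) (hk : 1 ≤ k) : w k ≤ 7 * w (k-1) := by
  obtain ⟨j, rfl⟩ : ∃ j, k = j + 1 := ⟨k-1, by omega⟩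
  simp only [Nat.add_sub_cancel, w]
  nlinarith [sq_nonneg j]

lemma termbound {n k : ℕ} (hn : 1 ≤ n) (hk : k ≤ n) :
    t (n+1) k ≤ 700 * ((if 2*k ≤ n then t n k else 0) + (if 2*k ≤ n then 0 else t n (k-1))) := by
  have ht : t (n+1) k = w k * (n.choose k)^2 * ((n+k+1).choose k)^2 := by
    simp only [t, Nat.add_sub_cancel]
    rw [show n+1+k = n+k+1 by omega]
  by_cases hc : 2*k ≤ n
  · rw [if_pos hc, if_pos hc, add_zero, ht]
    calc w k * (n.choose k)^2 * ((n+k+1).choose k)^2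
        ≤ w k * (2*(n-1).choose k)^2 * (2*(n+k).choose k)^2 := by
          exact Nat.mul_le_mul (Nat.mul_le_mul le_rfl
            (Nat.pow_le_pow_left (ch1 hc) 2)) (Nat.pow_le_pow_left (ch2 hk) 2)
      _ = 16 * (w k * ((n-1).choose k)^2 * ((n+k).choose k)^2) := by ring
      _ ≤ 700 * t n k := by
          simp only [t]; exact Nat.mul_le_mul_right _ (by omega)
  · rw [if_neg hc, if_neg hc, zero_add, ht]
    push_neg at hc
    have hk1 : 1 ≤ k := by omega
    have htk : t n (k-1) = w (k-1) * ((n-1).choose (k-1))^2 * ((n+k-1).choose (k-1))^2 := by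
      simp only [t]
      rw [show n+(k-1) = n+k-1 by omega]
    rw [htk]
    calc w k * (n.choose k)^2 * ((n+k+1).choose k)^2
        ≤ (7 * w (k-1)) * (2*(n-1).choose (k-1))^2 * (5*(n+k-1).choose (k-1))^2 := by
          exact Nat.mul_le_mul (Nat.mul_le_mul (w_succ_le k hk1)
            (Nat.pow_le_pow_left (ch4 hc hk) 2)) (Nat.pow_le_pow_left (ch5 hc hk) 2)
      _ = 700 * (w (k-1) * ((n-1).choose (k-1))^2 * ((n+k-1).choose (k-1))^2) := by ring

lemma S_succ_le {n : ℕ} (hn : 1 ≤ n) : S (n+1) ≤ 1400 * S n := by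
  have h1 : S (n+1) ≤ ∑ k ∈ Finset.range (n+1),
      700 * ((if 2*k ≤ n then t n k else 0) + (if 2*k ≤ n then 0 else t n (k-1))) := by
    apply Finset.sum_le_sum
    intro k hk
    exact termbound hn (by simpa using Nat.lt_succ_iff.mp (Finset.mem_range.mp hk))
  have h2 : ∑ k ∈ Finset.range (n+1), (if 2*k ≤ n then t n k else 0) ≤ S n := by
    rw [Finset.sum_range_succ, if_neg (by omega)]
    simp only [add_zero]
    apply Finset.sum_le_sum
    intro k _
    split <;> simp
  have h3 : ∑ k ∈ Finset.range (n+1), (if 2*k ≤ n then 0 else t n (k-1)) ≤ S n := by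
    rw [Finset.sum_range_succ']
    have : (if 2*0 ≤ n then 0 else t n (0-1)) = 0 := by rw [if_pos (by omega)]
    rw [this, add_zero]
    apply Finset.sum_le_sum
    intro k _
    simp only [Nat.add_sub_cancel]
    split <;> simp
  calc S (n+1) ≤ _ := h1
    _ = 700 * ((∑ k ∈ Finset.range (n+1), (if 2*k ≤ n then t n k else 0)) +
        ∑ k ∈ Finset.range (n+1), (if 2*k ≤ n then 0 else t n (k-1))) := by
        rw [← Finset.sum_add_distrib, Finset.mul_sum]
    _ ≤ 700 * (S n + S n) := by
        apply Nat.mul_le_mul_left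
        omega
    _ = 1400 * S n := by ring

lemma S_mono (n : ℕ) : S n ≤ S (n+1) := by
  calc S n ≤ ∑ k ∈ Finset.range n, t (n+1) k := by
        apply Finset.sum_le_sum
        intro k _
        simp only [t, Nat.add_sub_cancel]
        exact Nat.mul_le_mul (Nat.mul_le_mul le_rfl
          (Nat.pow_le_pow_left (Nat.choose_le_choose k (by omega)) 2))
          (Nat.pow_le_pow_left (Nat.choose_le_choose k (by omega)) 2)
    _ ≤ S (n+1) := by
        rw [S, Finset.sum_range_succ]
        omega

lemma S_ge (n : ℕ) : n^3 ≤ S n := by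
  have h : ∑ k ∈ Finset.range n, w k = n^3 := by
    induction n with
    | zero => simp
    | succ m ih => rw [Finset.sum_range_succ, ih, w]; ring
  rw [← h]
  apply Finset.sum_le_sum
  intro k hk
  have hk' := Finset.mem_range.mp hk
  have c1 : 1 ≤ (n-1).choose k := Nat.choose_pos (by omega)
  have c2 : 1 ≤ (n+k).choose k := Nat.choose_pos (by omega)
  calc w k = w k * 1 * 1 := by ring
    _ ≤ w k * ((n-1).choose k)^2 * ((n+k).choose k)^2 := by
        exact Nat.mul_le_mul (Nat.mul_le_mul le_rfl (by nlinarith)) (by nlinarith)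

noncomputable def b (n : ℕ) : ℝ :=
  (1 / (n : ℝ) ^ 3) * ∑ k ∈ Finset.range n,
    (3 * (k : ℝ) ^ 2 + 3 * (k : ℝ) + 1) * ((n - 1).choose k : ℝ) ^ 2 * ((n + k).choose k : ℝ) ^ 2

lemma b_eq (n : ℕ) : b n = (S n : ℝ) / (n:ℝ)^3 := by
  rw [b, S, one_div, inv_mul_eq_div]
  congr 1
  rw [Nat.cast_sum]
  apply Finset.sum_congr rfl
  intro k _
  simp only [t, w]
  push_cast
  ring

lemma b_pos {n : ℕ} (hn : 1 ≤ n) : 1 ≤ b n := by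
  rw [b_eq]
  rw [le_div_iff₀ (by positivity)]
  have := S_ge n
  have : ((n:ℝ))^3 ≤ (S n : ℝ) := by exact_mod_cast this
  linarith

lemma b_ratio_ub {n : ℕ} (hn : 1 ≤ n) : b (n+1) ≤ 1400 * b n := by
  rw [b_eq, b_eq]
  have h1 : (S (n+1) : ℝ) ≤ 1400 * S n := by exact_mod_cast S_succ_le hn
  have hn' : (1:ℝ) ≤ (n:ℝ) := by exact_mod_cast hn
  push_cast
  calc (S (n+1):ℝ)/((n:ℝ)+1)^3 ≤ (1400*(S n:ℝ))/((n:ℝ)+1)^3 := by gcongr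
    _ ≤ (1400*(S n:ℝ))/((n:ℝ))^3 := by
        rw [div_le_div_iff₀ (by positivity) (by positivity)]
        have hS : (0:ℝ) ≤ (S n:ℝ) := by positivity
        have h3 : ((n:ℝ))^3 ≤ ((n:ℝ)+1)^3 := by nlinarith
        nlinarith [mul_le_mul_of_nonneg_left h3 (by linarith : (0:ℝ) ≤ 1400*(S n:ℝ))]
    _ = 1400*((S n:ℝ)/(n:ℝ)^3) := by ring

lemma b_ratio_lb {n : ℕ} (hn : 1 ≤ n) : b n ≤ 8 * b (n+1) := by
  rw [b_eq, b_eq]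
  have h1 : (S n : ℝ) ≤ (S (n+1) : ℝ) := by exact_mod_cast S_mono n
  have hn' : (1:ℝ) ≤ (n:ℝ) := by exact_mod_cast hn
  have e1 : (n:ℝ)^2 ≤ (n:ℝ)^3 := by nlinarith
  have e2 : (n:ℝ) ≤ (n:ℝ)^3 := by nlinarith
  have e3 : (1:ℝ) ≤ (n:ℝ)^3 := by nlinarith
  have h2 : ((n:ℝ)+1)^3 ≤ 8 * (n:ℝ)^3 := by nlinarith
  have hn1 : (0:ℝ) < (n:ℝ)^3 := by positivity
  have hn2 : (0:ℝ) < ((n:ℝ)+1)^3 := by positivity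
  have hS : (0:ℝ) ≤ (S (n+1) : ℝ) := by positivity
  push_cast
  calc (S n:ℝ)/((n:ℝ))^3 ≤ (S (n+1):ℝ)/((n:ℝ))^3 := by gcongr
    _ ≤ (8*(S (n+1):ℝ))/((n:ℝ)+1)^3 := by
        rw [div_le_div_iff₀ hn1 hn2]
        nlinarith [mul_le_mul_of_nonneg_left h2 hS]
    _ = 8*((S (n+1):ℝ)/((n:ℝ)+1)^3) := by ring

lemma b_ub : ∀ n : ℕ, 1 ≤ n → b n ≤ 1400 ^ n := by
  intro n
  induction n with
  | zero => omega
  | succ m ih =>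
    intro _
    rcases Nat.eq_zero_or_pos m with rfl | hm
    · have : b 1 = 1 := by
        rw [b_eq]
        norm_num [S, t, w, Finset.sum_range_one]
      rw [this]; norm_num
    · calc b (m+1) ≤ 1400 * b m := b_ratio_ub hm
        _ ≤ 1400 * 1400 ^ m := by
            have := ih hm
            nlinarith
        _ = 1400 ^ (m+1) := by ring

theorem b_root_ratio_tendsto_one :
    Filter.Tendsto
      (fun n : ℕ => b (n + 1) ^ ((1 : ℝ) / ((n : ℝ) + 1)) / b n ^ ((1 : ℝ) / (n : ℝ)))
      Filter.atTop (nhds 1) := by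
  set M : ℝ := Real.log 1400 with hMdef
  have hM : 0 ≤ M := Real.log_nonneg (by norm_num)
  set f : ℕ → ℝ := fun n =>
    Real.log (b (n+1)) * ((1:ℝ)/((n:ℝ)+1)) - Real.log (b n) * ((1:ℝ)/(n:ℝ)) with hfdef
  have hf : Filter.Tendsto f Filter.atTop (nhds 0) := by
    refine squeeze_zero_norm' ?_ (tendsto_const_div_atTop_nhds_zero_nat (2*M))
    filter_upwards [Filter.eventually_ge_atTop 1] with n hn
    have hN : (1:ℝ) ≤ (n:ℝ) := by exact_mod_cast hn
    have hNp : (0:ℝ) < (n:ℝ) := by linarith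
    have hN1 : (0:ℝ) < (n:ℝ)+1 := by linarith
    set N := (n:ℝ)
    set x := Real.log (b n) with hxd
    set y := Real.log (b (n+1)) with hyd
    have hb1 : (1:ℝ) ≤ b n := b_pos hn
    have hb2 : (1:ℝ) ≤ b (n+1) := b_pos (by omega)
    have hx0 : 0 ≤ x := Real.log_nonneg hb1
    have hxM : x ≤ N * M := by
      have h1 : b n ≤ 1400 ^ n := b_ub n hn
      have h2 : x ≤ Real.log (1400 ^ n) := Real.log_le_log (by linarith) h1
      rw [Real.log_pow] at h2
      exact h2
    have hyx : y - x ≤ M := by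
      have h1 : b (n+1) ≤ 1400 * b n := b_ratio_ub hn
      have h2 : y ≤ Real.log (1400 * b n) := Real.log_le_log (by linarith) h1
      rw [Real.log_mul (by norm_num) (by linarith)] at h2
      linarith
    have hxy : x - y ≤ M := by
      have h1 : b n ≤ 8 * b (n+1) := b_ratio_lb hn
      have h2 : x ≤ Real.log (8 * b (n+1)) := Real.log_le_log (by linarith) h1
      rw [Real.log_mul (by norm_num) (by linarith)] at h2
      have h3 : Real.log 8 ≤ M := Real.log_le_log (by norm_num) (by norm_num)
      linarith
    have habs : |y - x| ≤ M := abs_sub_le_iff.mpr ⟨hyx, hxy⟩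
    have e : y*((1:ℝ)/(N+1)) - x*((1:ℝ)/N) = (y-x)/(N+1) - x/(N*(N+1)) := by
      field_simp
      ring
    show ‖y*((1:ℝ)/(N+1)) - x*((1:ℝ)/N)‖ ≤ 2*M/N
    rw [Real.norm_eq_abs, e]
    have tri : |(y-x)/(N+1) - x/(N*(N+1))| ≤ |(y-x)/(N+1)| + |x/(N*(N+1))| := by
      simpa [sub_eq_add_neg, abs_neg] using abs_add_le ((y-x)/(N+1)) (-(x/(N*(N+1))))
    have p1 : |(y-x)/(N+1)| ≤ M/(N+1) := by
      rw [abs_div, abs_of_pos hN1]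
      gcongr
    have p2 : |x/(N*(N+1))| ≤ M/(N+1) := by
      rw [abs_of_nonneg (by positivity)]
      calc x/(N*(N+1)) ≤ (N*M)/(N*(N+1)) := by gcongr
        _ = M/(N+1) := by field_simp
    have p3 : M/(N+1) ≤ M/N := by gcongr; linarith
    calc |(y-x)/(N+1) - x/(N*(N+1))| ≤ M/(N+1) + M/(N+1) := by linarith
      _ ≤ M/N + M/N := by linarith
      _ = 2*M/N := by ring
  have hexp : Filter.Tendsto (fun n => Real.exp (f n)) Filter.atTop (nhds 1) := by
    have := (Real.continuous_exp.tendsto 0).comp hf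
    simpa [Function.comp_def] using this
  apply hexp.congr'
  filter_upwards [Filter.eventually_ge_atTop 1] with n hn
  have hb1 : (0:ℝ) < b n := by linarith [b_pos hn]
  have hb2 : (0:ℝ) < b (n+1) := by linarith [b_pos (show 1 ≤ n+1 by omega)]
  rw [Real.rpow_def_of_pos hb2, Real.rpow_def_of_pos hb1, hfdef]
  rw [← Real.exp_sub]
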